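/- Let u = (u_{i,j}) be a finitely supported table of nonnegative rationals over A = k[t] lying in the cone B of Betti tables of bounded free complexes with torsion homology (i.e., u satisfies u_{i,j} ≥ 0 for all i,j, χ_{i,j}(u) ≥ 0 for all i,j, and Σ(-1)^i u_{i,j} = 0). Then the decomposition of u as a positive rational combination of two-entry pure tables T_{s,p,q} (entry 1 at (s,p) and (s+1, p+q)) whose associated degree sequences form a chain is unique. -/

import Mathlib

/-- The Eisenbud–Erman functional `χ_{i,j}` on Betti tables over `A = k[t]`. -/
noncomputable def chiFunctional (β : ℤ → ℤ → ℚ) (i j : ℤ) : ℚ :=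
  (∑ᶠ m ∈ Set.Iic j, β i m) - (∑ᶠ m ∈ Set.Iic (j + 1), β (i + 1) m)
    + ∑ᶠ p ∈ Set.Ici (i + 2), (-1 : ℚ) ^ (p - i) * ∑ᶠ m : ℤ, β p m

/-- The two-entry pure table `T_{s,p,q}`: the Betti table of the shifted resolution of
`A(-p)/(t^q)` in homological degrees `s, s+1`, with entries `1` at `(s,p)` and
`(s+1, p+q)`. Here `t = (s, p, q)`. -/
noncomputable def cyclicTable (t : ℤ × ℤ × ℤ) : ℤ → ℤ → ℚ := fun i j =>
  (if i = t.1 ∧ j = t.2.1 then 1 else 0) +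
    (if i = t.1 + 1 ∧ j = t.2.1 + t.2.2 then 1 else 0)

/-- The degree sequence associated to the triple `t = (s,p,q)`: entries `p` at
position `s`, `p+q` at position `s+1`, `-∞` to the left and `+∞` to the right. -/
def cyclicDegSeq (t : ℤ × ℤ × ℤ) : ℤ → WithBot (WithTop ℤ) := fun i =>
  if i < t.1 then ⊥
  else if i = t.1 then ((t.2.1 : WithTop ℤ) : WithBot (WithTop ℤ))
  else if i = t.1 + 1 then (((t.2.1 + t.2.2 : ℤ) : WithTop ℤ) : WithBot (WithTop ℤ))
  else ⊤

/-- `c` is a decomposition of the table `u` as a positive rational combination of the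
pure tables `T_{s,p,q}` (with `q ≥ 1`) whose degree sequences form a chain. -/
def IsChainDecomposition (u : ℤ → ℤ → ℚ) (c : ℤ × ℤ × ℤ → ℚ) : Prop :=
  (Function.support c).Finite ∧
  (∀ t, c t ≠ 0 → 0 < c t ∧ 1 ≤ t.2.2) ∧
  (∀ t t', c t ≠ 0 → c t' ≠ 0 →
    (∀ i, cyclicDegSeq t i ≤ cyclicDegSeq t' i) ∨
      (∀ i, cyclicDegSeq t' i ≤ cyclicDegSeq t i)) ∧
  (∀ i j : ℤ, u i j = ∑ᶠ t : ℤ × ℤ × ℤ, c t * cyclicTable t i j)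

lemma cyclicTable_nonneg (t : ℤ × ℤ × ℤ) (i j : ℤ) : 0 ≤ cyclicTable t i j := by
  unfold cyclicTable
  have h1 : (0:ℚ) ≤ if i = t.1 ∧ j = t.2.1 then 1 else 0 := by split <;> norm_num
  have h2 : (0:ℚ) ≤ if i = t.1 + 1 ∧ j = t.2.1 + t.2.2 then 1 else 0 := by split <;> norm_num
  linarith

lemma one_le_start (t : ℤ × ℤ × ℤ) : (1:ℚ) ≤ cyclicTable t t.1 t.2.1 := by
  unfold cyclicTable
  rw [if_pos ⟨rfl, rfl⟩]
  have h2 : (0:ℚ) ≤ if t.1 = t.1 + 1 ∧ t.2.1 = t.2.1 + t.2.2 then 1 else 0 := by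
    split <;> norm_num
  linarith

lemma one_le_end (t : ℤ × ℤ × ℤ) : (1:ℚ) ≤ cyclicTable t (t.1+1) (t.2.1+t.2.2) := by
  unfold cyclicTable
  rw [if_neg (by rintro ⟨h, -⟩; omega), if_pos ⟨rfl, rfl⟩]
  norm_num

lemma c_nonneg {u : ℤ → ℤ → ℚ} {c : ℤ × ℤ × ℤ → ℚ} (hc : IsChainDecomposition u c)
    (t : ℤ × ℤ × ℤ) : 0 ≤ c t := by
  by_cases h : c t = 0
  · simp [h]
  · exact (hc.2.1 t h).1.le

lemma supportTermFinite {u : ℤ → ℤ → ℚ} {c : ℤ × ℤ × ℤ → ℚ} (hc : IsChainDecomposition u c)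
    (i j : ℤ) : (Function.support fun t => c t * cyclicTable t i j).Finite := by
  apply hc.1.subset
  intro t ht
  simp only [Function.mem_support] at ht ⊢
  intro h
  exact ht (by rw [h, zero_mul])

lemma term_le {u : ℤ → ℤ → ℚ} {c : ℤ × ℤ × ℤ → ℚ} (hc : IsChainDecomposition u c)
    (t : ℤ × ℤ × ℤ) (i j : ℤ) : c t * cyclicTable t i j ≤ u i j := by
  rw [hc.2.2.2 i j]
  exact single_le_finsum t (supportTermFinite hc i j)
    (fun t' => mul_nonneg (c_nonneg hc t') (cyclicTable_nonneg t' i j))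

lemma u_zero {u : ℤ → ℤ → ℚ} {c : ℤ × ℤ × ℤ → ℚ} (hc : IsChainDecomposition u c)
    (i j : ℤ) (h : ∀ t, c t ≠ 0 → cyclicTable t i j = 0) : u i j = 0 := by
  rw [hc.2.2.2 i j]
  calc ∑ᶠ t : ℤ × ℤ × ℤ, c t * cyclicTable t i j
      = ∑ᶠ _t : ℤ × ℤ × ℤ, (0:ℚ) := by
        apply finsum_congr
        intro t
        by_cases ht : c t = 0
        · rw [ht, zero_mul]
        · rw [h t ht, mul_zero]
    _ = 0 := finsum_zero

lemma seq_self (t : ℤ × ℤ × ℤ) :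
    cyclicDegSeq t t.1 = ((t.2.1 : WithTop ℤ) : WithBot (WithTop ℤ)) := by
  simp [cyclicDegSeq]

lemma seq_succ (t : ℤ × ℤ × ℤ) :
    cyclicDegSeq t (t.1+1) = (((t.2.1 + t.2.2 : ℤ) : WithTop ℤ) : WithBot (WithTop ℤ)) := by
  unfold cyclicDegSeq
  rw [if_neg (by omega), if_neg (by omega), if_pos rfl]

lemma seq_top (t : ℤ × ℤ × ℤ) (i : ℤ) (h : t.1 + 1 < i) : cyclicDegSeq t i = ⊤ := by
  unfold cyclicDegSeq
  rw [if_neg (by omega), if_neg (by omega), if_neg (by omega)]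

lemma coe_ne_top' (x : ℤ) : ((x : WithTop ℤ) : WithBot (WithTop ℤ)) ≠ ⊤ := by simp

lemma seq_top_iff (t : ℤ × ℤ × ℤ) (i : ℤ) (h : cyclicDegSeq t i = ⊤) : t.1 + 1 < i := by
  unfold cyclicDegSeq at h
  by_contra hcon
  push_neg at hcon
  rcases lt_trichotomy i t.1 with h1 | h1 | h1
  · rw [if_pos h1] at h; simp at h
  · rw [if_neg (by omega), if_pos h1] at h; simp at h
  · have h2 : i = t.1 + 1 := by omega
    rw [if_neg (by omega), if_neg (by omega), if_pos h2] at h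
    exact coe_ne_top' _ h

lemma exists_min {u : ℤ → ℤ → ℚ} {c : ℤ × ℤ × ℤ → ℚ} (hc : IsChainDecomposition u c)
    (hne : (Function.support c).Nonempty) :
    ∃ t1, c t1 ≠ 0 ∧ ∀ t, c t ≠ 0 → ∀ i, cyclicDegSeq t1 i ≤ cyclicDegSeq t i := by
  obtain ⟨t1, ht1, hmin⟩ := Set.Finite.exists_minimalFor cyclicDegSeq _ hc.1 hne
  rw [Function.mem_support] at ht1
  refine ⟨t1, ht1, ?_⟩
  intro t ht i
  rcases hc.2.2.1 t1 t ht1 ht with h | h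
  · exact h i
  · have h2 : cyclicDegSeq t ≤ cyclicDegSeq t1 := fun k => h k
    have h3 := hmin (j := t) (Function.mem_support.mpr ht) h2
    exact h3 i

lemma min_props {u : ℤ → ℤ → ℚ} {c : ℤ × ℤ × ℤ → ℚ} (hc : IsChainDecomposition u c)
    (t1 : ℤ × ℤ × ℤ) (h1 : c t1 ≠ 0)
    (hmin : ∀ t, c t ≠ 0 → ∀ i, cyclicDegSeq t1 i ≤ cyclicDegSeq t i) :
    0 < u t1.1 t1.2.1 ∧ 0 < u (t1.1+1) (t1.2.1+t1.2.2) ∧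
    (∀ i j, t1.1+1 < i → u i j = 0) ∧
    (∀ j, j < t1.2.1 → u t1.1 j = 0) ∧
    (∀ j, j < t1.2.1+t1.2.2 → u (t1.1+1) j = 0) := by
  have hct1 : 0 < c t1 := (hc.2.1 t1 h1).1
  have hs : ∀ t, c t ≠ 0 → t.1 ≤ t1.1 := by
    intro t ht
    have h2 := hmin t ht (t1.1+2)
    rw [seq_top t1 _ (by omega)] at h2
    have h3 := seq_top_iff t _ (top_le_iff.mp h2)
    omega
  have hp : ∀ t, c t ≠ 0 → t.1 = t1.1 → t1.2.1 ≤ t.2.1 := by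
    intro t ht hts
    have h2 := hmin t ht t1.1
    rw [seq_self t1, ← hts, seq_self t] at h2
    exact_mod_cast h2
  have hq : ∀ t, c t ≠ 0 → t.1 = t1.1 → t1.2.1 + t1.2.2 ≤ t.2.1 + t.2.2 := by
    intro t ht hts
    have h2 := hmin t ht (t1.1+1)
    rw [seq_succ t1, show t1.1 + 1 = t.1 + 1 by omega, seq_succ t] at h2
    exact_mod_cast h2
  have hpe : ∀ t, c t ≠ 0 → t.1 + 1 = t1.1 → t1.2.1 ≤ t.2.1 + t.2.2 := by
    intro t ht hts
    have h2 := hmin t ht t1.1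
    rw [seq_self t1, ← hts, seq_succ t] at h2
    exact_mod_cast h2
  refine ⟨?_, ?_, ?_, ?_, ?_⟩
  · have h2 := term_le hc t1 t1.1 t1.2.1
    have h3 := one_le_start t1
    nlinarith
  · have h2 := term_le hc t1 (t1.1+1) (t1.2.1+t1.2.2)
    have h3 := one_le_end t1
    nlinarith
  · intro i j hij
    apply u_zero hc
    intro t ht
    unfold cyclicTable
    rw [if_neg (by rintro ⟨h', -⟩; have := hs t ht; omega),
        if_neg (by rintro ⟨h', -⟩; have := hs t ht; omega)]
    norm_num
  · intro j hj
    apply u_zero hc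
    intro t ht
    unfold cyclicTable
    rw [if_neg (by rintro ⟨h1', h2'⟩; have := hp t ht h1'.symm; omega),
        if_neg (by rintro ⟨h1', h2'⟩; have := hpe t ht h1'.symm; omega)]
    norm_num
  · intro j hj
    apply u_zero hc
    intro t ht
    unfold cyclicTable
    rw [if_neg (by rintro ⟨h1', -⟩; have := hs t ht; omega),
        if_neg (by rintro ⟨h1', h2'⟩; have := hq t ht (by omega); omega)]
    norm_num

lemma c_eq_zero {u : ℤ → ℤ → ℚ} {c : ℤ × ℤ × ℤ → ℚ} (hc : IsChainDecomposition u c)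
    (hu : ∀ i j, u i j = 0) : c = 0 := by
  funext t
  by_contra ht
  have h1 := term_le hc t t.1 t.2.1
  have hpos := (hc.2.1 t ht).1
  have hT := one_le_start t
  rw [hu t.1 t.2.1] at h1
  nlinarith

lemma peel {u : ℤ → ℤ → ℚ} {c : ℤ × ℤ × ℤ → ℚ} (hc : IsChainDecomposition u c)
    (t1 : ℤ × ℤ × ℤ) (ht1 : c t1 ≠ 0) (a : ℚ) (ha : a ≤ c t1) :
    IsChainDecomposition (fun i j => u i j - a * cyclicTable t1 i j)
      (Function.update c t1 (c t1 - a)) := by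
  have hdc : ∀ t, t ≠ t1 → Function.update c t1 (c t1 - a) t = c t :=
    fun t ht => Function.update_of_ne ht _ _
  have hdt1 : Function.update c t1 (c t1 - a) t1 = c t1 - a := Function.update_self _ _ _
  have hsupp : Function.support (Function.update c t1 (c t1 - a)) ⊆ Function.support c := by
    intro t ht
    simp only [Function.mem_support] at ht ⊢
    by_cases h : t = t1
    · subst h; exact ht1
    · rwa [hdc t h] at ht
  have hne0 : ∀ t, Function.update c t1 (c t1 - a) t ≠ 0 → c t ≠ 0 := by
    intro t ht
    exact Function.mem_support.mp (hsupp (Function.mem_support.mpr ht))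
  refine ⟨hc.1.subset hsupp, ?_, ?_, ?_⟩
  · intro t ht
    by_cases h : t = t1
    · subst h
      rw [hdt1] at ht ⊢
      exact ⟨lt_of_le_of_ne (by linarith) (Ne.symm ht), (hc.2.1 _ ht1).2⟩
    · rw [hdc t h] at ht ⊢
      exact hc.2.1 t ht
  · intro t t' ht ht'
    exact hc.2.2.1 t t' (hne0 t ht) (hne0 t' ht')
  · intro i j
    have hgfin := supportTermFinite hc i j
    have hefin : (Function.support
        fun t : ℤ × ℤ × ℤ => if t = t1 then -(a * cyclicTable t1 i j) else 0).Finite := by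
      apply Set.Finite.subset (Set.finite_singleton t1)
      intro t ht
      simp only [Function.mem_support] at ht
      simp only [Set.mem_singleton_iff]
      by_contra h
      exact ht (if_neg h)
    have key : ∀ t, Function.update c t1 (c t1 - a) t * cyclicTable t i j
        = c t * cyclicTable t i j + (if t = t1 then -(a * cyclicTable t1 i j) else 0) := by
      intro t
      by_cases h : t = t1
      · subst h; rw [hdt1, if_pos rfl]; ring
      · rw [hdc t h, if_neg h]; ring
    show u i j - a * cyclicTable t1 i j
        = ∑ᶠ t : ℤ × ℤ × ℤ, Function.update c t1 (c t1 - a) t * cyclicTable t i j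
    rw [finsum_congr key, finsum_add_distrib hgfin hefin,
        finsum_eq_single (fun t : ℤ × ℤ × ℤ => if t = t1 then -(a * cyclicTable t1 i j) else 0)
          t1 (fun x hx => if_neg hx),
        if_pos rfl, ← hc.2.2.2 i j]
    ring

lemma chain_aux : ∀ (n : ℕ) (u : ℤ → ℤ → ℚ) (c c' : ℤ × ℤ × ℤ → ℚ),
    IsChainDecomposition u c → IsChainDecomposition u c' →
    (Function.support c).ncard + (Function.support c').ncard ≤ n → c = c' := by
  intro n
  induction n with
  | zero =>
    intro u c c' hc hc' hn
    have h1 : c = 0 := Function.support_eq_empty_iff.mp ((Set.ncard_eq_zero hc.1).mp (by omega))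
    have h2 : c' = 0 := Function.support_eq_empty_iff.mp ((Set.ncard_eq_zero hc'.1).mp (by omega))
    rw [h1, h2]
  | succ n ih =>
    intro u c c' hc hc' hn
    rcases Set.eq_empty_or_nonempty (Function.support c) with hne | hne
    · have h1 : c = 0 := Function.support_eq_empty_iff.mp hne
      have hu : ∀ i j, u i j = 0 := by
        intro i j
        rw [hc.2.2.2 i j]
        calc ∑ᶠ t : ℤ × ℤ × ℤ, c t * cyclicTable t i j
            = ∑ᶠ _t : ℤ × ℤ × ℤ, (0:ℚ) :=
              finsum_congr (fun t => by rw [h1]; simp)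
          _ = 0 := finsum_zero
      rw [h1, c_eq_zero hc' hu]
    rcases Set.eq_empty_or_nonempty (Function.support c') with hne' | hne'
    · have h1 : c' = 0 := Function.support_eq_empty_iff.mp hne'
      have hu : ∀ i j, u i j = 0 := by
        intro i j
        rw [hc'.2.2.2 i j]
        calc ∑ᶠ t : ℤ × ℤ × ℤ, c' t * cyclicTable t i j
            = ∑ᶠ _t : ℤ × ℤ × ℤ, (0:ℚ) :=
              finsum_congr (fun t => by rw [h1]; simp)
          _ = 0 := finsum_zero
      rw [h1, c_eq_zero hc hu]
    -- main case
    obtain ⟨t1, ht1, hmin⟩ := exists_min hc hne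
    obtain ⟨t1', ht1', hmin'⟩ := exists_min hc' hne'
    obtain ⟨hA, hB, hC, hD, hE⟩ := min_props hc t1 ht1 hmin
    obtain ⟨hA', hB', hC', hD', hE'⟩ := min_props hc' t1' ht1' hmin'
    have hs : t1.1 = t1'.1 := by
      by_contra h
      rcases lt_or_gt_of_ne h with h | h
      · exact absurd (hC _ _ (by omega)) (ne_of_gt hB')
      · exact absurd (hC' _ _ (by omega)) (ne_of_gt hB)
    have hp : t1.2.1 = t1'.2.1 := by
      by_contra h
      rcases lt_or_gt_of_ne h with h | h
      · have h2 := hD' t1.2.1 h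
        rw [← hs] at h2
        exact absurd h2 (ne_of_gt hA)
      · have h2 := hD t1'.2.1 h
        rw [hs] at h2
        exact absurd h2 (ne_of_gt hA')
    have hqe : t1.2.1 + t1.2.2 = t1'.2.1 + t1'.2.2 := by
      by_contra h
      rcases lt_or_gt_of_ne h with h | h
      · have h2 := hE' (t1.2.1 + t1.2.2) h
        rw [← hs] at h2
        exact absurd h2 (ne_of_gt hB)
      · have h2 := hE (t1'.2.1 + t1'.2.2) h
        rw [hs] at h2
        exact absurd h2 (ne_of_gt hB')
    have ht1eq : t1 = t1' := by
      have hq2 : t1.2.2 = t1'.2.2 := by omega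
      exact Prod.ext hs (Prod.ext hp hq2)
    rw [← ht1eq] at ht1'
    -- peel
    have hac : min (c t1) (c' t1) ≤ c t1 := min_le_left _ _
    have hac' : min (c t1) (c' t1) ≤ c' t1 := min_le_right _ _
    have hdICD := peel hc t1 ht1 (min (c t1) (c' t1)) hac
    have hd'ICD := peel hc' t1 ht1' (min (c t1) (c' t1)) hac'
    have hsub : Function.support (Function.update c t1 (c t1 - min (c t1) (c' t1)))
        ⊆ Function.support c := by
      intro t ht
      simp only [Function.mem_support] at ht ⊢
      by_cases h : t = t1
      · subst h; exact ht1
      · rwa [Function.update_of_ne h] at ht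
    have hsub' : Function.support (Function.update c' t1 (c' t1 - min (c t1) (c' t1)))
        ⊆ Function.support c' := by
      intro t ht
      simp only [Function.mem_support] at ht ⊢
      by_cases h : t = t1
      · subst h; exact ht1'
      · rwa [Function.update_of_ne h] at ht
    have hcard1 : (Function.support (Function.update c t1 (c t1 - min (c t1) (c' t1)))).ncard
        ≤ (Function.support c).ncard := Set.ncard_le_ncard hsub hc.1
    have hcard2 : (Function.support (Function.update c' t1 (c' t1 - min (c t1) (c' t1)))).ncard
        ≤ (Function.support c').ncard := Set.ncard_le_ncard hsub' hc'.1
    have hpos1 : 0 < (Function.support c).ncard := (Set.ncard_pos hc.1).mpr hne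
    have hpos2 : 0 < (Function.support c').ncard := (Set.ncard_pos hc'.1).mpr hne'
    have hlt : (Function.support (Function.update c t1 (c t1 - min (c t1) (c' t1)))).ncard
        + (Function.support (Function.update c' t1 (c' t1 - min (c t1) (c' t1)))).ncard ≤ n := by
      rcases min_choice (c t1) (c' t1) with h | h
      · have hd0 : Function.support (Function.update c t1 (c t1 - min (c t1) (c' t1)))
            ⊆ Function.support c \ {t1} := by
          intro t ht
          refine ⟨hsub ht, ?_⟩
          simp only [Set.mem_singleton_iff]
          intro he
          subst he
          simp only [Function.mem_support, Function.update_self] at ht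
          exact ht (by rw [h]; ring)
        have h1 : (Function.support (Function.update c t1 (c t1 - min (c t1) (c' t1)))).ncard
            ≤ (Function.support c).ncard - 1 := by
          calc _ ≤ (Function.support c \ {t1}).ncard :=
                Set.ncard_le_ncard hd0 (hc.1.diff)
            _ = (Function.support c).ncard - 1 :=
                Set.ncard_diff_singleton_of_mem (Function.mem_support.mpr ht1)
        omega
      · have hd0 : Function.support (Function.update c' t1 (c' t1 - min (c t1) (c' t1)))
            ⊆ Function.support c' \ {t1} := by
          intro t ht
          refine ⟨hsub' ht, ?_⟩
          simp only [Set.mem_singleton_iff]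
          intro he
          subst he
          simp only [Function.mem_support, Function.update_self] at ht
          exact ht (by rw [h]; ring)
        have h1 : (Function.support (Function.update c' t1 (c' t1 - min (c t1) (c' t1)))).ncard
            ≤ (Function.support c').ncard - 1 := by
          calc _ ≤ (Function.support c' \ {t1}).ncard :=
                Set.ncard_le_ncard hd0 (hc'.1.diff)
            _ = (Function.support c').ncard - 1 :=
                Set.ncard_diff_singleton_of_mem (Function.mem_support.mpr ht1')
        omega
    have heq := ih _ _ _ hdICD hd'ICD hlt
    funext t
    by_cases h : t = t1
    · subst h
      have h2 := congrFun heq t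
      rw [Function.update_self, Function.update_self] at h2
      linarith
    · have h2 := congrFun heq t
      rwa [Function.update_of_ne h, Function.update_of_ne h] at h2


/-- **Uniqueness of the chain decomposition over `A = k[t]`.** If `u` lies in the cone
of Betti tables of bounded free complexes with torsion homology (entries nonnegative,
finitely supported, all `χ_{i,j}(u) ≥ 0`, total Euler characteristic zero), then any two
decompositions of `u` as positive rational combinations of pure two-entry tables whose
degree sequences form a chain coincide. -/
theorem chain_decomposition_unique (u : ℤ → ℤ → ℚ)
    (hpos : ∀ i j, 0 ≤ u i j)
    (hfin : (Function.support fun x : ℤ × ℤ => u x.1 x.2).Finite)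
    (hchi : ∀ i j : ℤ, 0 ≤ chiFunctional u i j)
    (heuler : ∑ᶠ a : ℤ, (-1 : ℚ) ^ a * ∑ᶠ b : ℤ, u a b = 0)
    (c c' : ℤ × ℤ × ℤ → ℚ)
    (hc : IsChainDecomposition u c) (hc' : IsChainDecomposition u c') : c = c' :=
  chain_aux ((Function.support c).ncard + (Function.support c').ncard) u c c' hc hc' le_rfl
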